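/- Let C ≥ 2, y ∈ {1,…,C}, α ≥ 0, Δ ∈ ℝ^C, and β ∈ ℝ^C with β_j > 0 for all j. Define L : ℝ^C → ℝ by L(s) = α · ln( 1 + Σ_{j ≠ y} exp(β_j s_j − β_y s_y + Δ_j − Δ_y) ). Fix reals B and U, set A = Σ_{j ≠ y} exp(β_j U + Δ_j), and let K = { s ∈ ℝ^C : s_y ≥ B and s_j ≤ U for all j ≠ y }. Then for all s, s′ ∈ K, |L(s) − L(s′)| ≤ α · √( β_y² + (Σ_{j ≠ y} β_j)² ) · ( A / ( exp(β_y B + Δ_y) + A ) ) · ‖s − s′‖₂. -/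

import Mathlib

open Finset

set_option maxHeartbeats 1000000 in
/-- **Local Lipschitz continuity of the VS loss (Lemma 3).** With `α ≥ 0`, `β j > 0`,
`A = ∑_{j ≠ y} exp(β j * U + Δ j)`, and the VS loss
`L s = α · ln(1 + ∑_{j ≠ y} exp(β j * s j - β y * s y + Δ j - Δ y))` on Euclidean `ℝ^C`,
for any `s, s'` in the box `{s : s y ≥ B, s j ≤ U ∀ j ≠ y}` one has
`|L s - L s'| ≤ α · √(β y ^ 2 + (∑_{j ≠ y} β j) ^ 2) · (A / (exp(β y * B + Δ y) + A)) · ‖s - s'‖₂`. -/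
theorem vs_loss_locally_lipschitz (C : ℕ) (hC : 2 ≤ C) (y : Fin C)
    (α : ℝ) (hα : 0 ≤ α) (Δ β : Fin C → ℝ) (hβ : ∀ j, 0 < β j) (B U : ℝ) :
    ∀ s s' : EuclideanSpace ℝ (Fin C),
      (B ≤ s y ∧ ∀ j, j ≠ y → s j ≤ U) →
      (B ≤ s' y ∧ ∀ j, j ≠ y → s' j ≤ U) →
      |α * Real.log
          (1 + ∑ j ∈ Finset.univ.erase y,
            Real.exp (β j * s j - β y * s y + Δ j - Δ y)) -
        α * Real.log
          (1 + ∑ j ∈ Finset.univ.erase y,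
            Real.exp (β j * s' j - β y * s' y + Δ j - Δ y))| ≤
        α * Real.sqrt (β y ^ 2 + (∑ j ∈ Finset.univ.erase y, β j) ^ 2) *
          ((∑ j ∈ Finset.univ.erase y, Real.exp (β j * U + Δ j)) /
            (Real.exp (β y * B + Δ y) +
              ∑ j ∈ Finset.univ.erase y, Real.exp (β j * U + Δ j))) *
          ‖s - s'‖ := by
  intro s s' hs hs'
  obtain ⟨hsB, hsU⟩ := hs
  obtain ⟨hs'B, hs'U⟩ := hs'
  set E : Finset (Fin C) := Finset.univ.erase y with hE
  set A : ℝ := ∑ j ∈ E, Real.exp (β j * U + Δ j) with hA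
  set c : ℝ := Real.exp (β y * B + Δ y) with hc
  have hc0 : 0 < c := Real.exp_pos _
  have hA0 : 0 ≤ A := Finset.sum_nonneg fun j _ => (Real.exp_pos _).le
  have hden : 0 < c + A := by linarith
  set P : ℝ := A / (c + A) with hP
  have hP0 : 0 ≤ P := div_nonneg hA0 hden.le
  set K : ℝ := Real.sqrt (β y ^ 2 + (∑ j ∈ E, β j) ^ 2) with hK
  have hK0 : 0 ≤ K := Real.sqrt_nonneg _
  set d : Fin C → ℝ := fun j => s j - s' j with hd
  set a : Fin C → ℝ := fun j => β j * d j - β y * d y with ha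
  set b : Fin C → ℝ := fun j => β j * s' j - β y * s' y + Δ j - Δ y with hb
  set T : ℝ → ℝ := fun t => ∑ j ∈ E, Real.exp (a j * t + b j) with hT
  have hT0 : ∀ t, 0 ≤ T t := fun t => Finset.sum_nonneg fun j _ => (Real.exp_pos _).le
  have hT1 : ∀ t, 0 < 1 + T t := fun t => by have := hT0 t; linarith
  set g : ℝ → ℝ := fun t => α * Real.log (1 + T t) with hg
  set g' : ℝ → ℝ :=
    fun t => α * ((∑ j ∈ E, a j * Real.exp (a j * t + b j)) / (1 + T t)) with hg'
  have hgd : ∀ t : ℝ, HasDerivAt g (g' t) t := by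
    intro t
    have hTd : HasDerivAt T (∑ j ∈ E, a j * Real.exp (a j * t + b j)) t := by
      apply HasDerivAt.fun_sum
      intro j hj
      have h1 : HasDerivAt (fun t : ℝ => a j * t + b j) (a j) t := by
        simpa using ((hasDerivAt_id t).const_mul (a j)).add_const (b j)
      simpa [mul_comm] using h1.exp
    have h2 : HasDerivAt (fun t => 1 + T t) (∑ j ∈ E, a j * Real.exp (a j * t + b j)) t :=
      hTd.const_add 1
    exact (h2.log (hT1 t).ne').const_mul α
  set M : ℝ := α * K * P * ‖s - s'‖ with hM
  have hbound : ∀ t ∈ Set.Icc (0 : ℝ) 1, ‖g' t‖ ≤ M := by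
    intro t ht
    obtain ⟨ht0, ht1⟩ := ht
    set e : Fin C → ℝ := fun j => Real.exp (a j * t + b j) with he
    have hTe : T t = ∑ j ∈ E, e j := rfl
    have he0 : ∀ j, 0 < e j := fun j => Real.exp_pos _
    -- segment point is in the box, so T t / (1 + T t) ≤ P
    have hexp : ∀ j ∈ E, e j ≤ Real.exp (β j * U + Δ j) / c := by
      intro j hj
      have hjy : j ≠ y := Finset.ne_of_mem_erase hj
      have hxU : s' j + t * d j ≤ U := by
        have h1 := hsU j hjy
        have h2 := hs'U j hjy
        have h3 : s' j + t * d j = (1 - t) * s' j + t * s j := by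
          simp only [hd]; ring
        rw [h3]
        calc (1 - t) * s' j + t * s j ≤ (1 - t) * U + t * U :=
              add_le_add (mul_le_mul_of_nonneg_left h2 (by linarith))
                (mul_le_mul_of_nonneg_left h1 ht0)
          _ = U := by ring
      have hxB : B ≤ s' y + t * d y := by
        have h3 : s' y + t * d y = (1 - t) * s' y + t * s y := by
          simp only [hd]; ring
        rw [h3]
        calc B = (1 - t) * B + t * B := by ring
          _ ≤ _ := add_le_add (mul_le_mul_of_nonneg_left hs'B (by linarith))
                (mul_le_mul_of_nonneg_left hsB ht0)
      have hx : a j * t + b j = β j * (s' j + t * d j) - β y * (s' y + t * d y) + Δ j - Δ y := by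
        simp only [ha, hb]; ring
      show Real.exp (a j * t + b j) ≤ Real.exp (β j * U + Δ j) / c
      rw [hx, hc, ← Real.exp_sub]
      apply Real.exp_le_exp.2
      have h1 : β j * (s' j + t * d j) ≤ β j * U :=
        mul_le_mul_of_nonneg_left hxU (hβ j).le
      have h2 : β y * B ≤ β y * (s' y + t * d y) :=
        mul_le_mul_of_nonneg_left hxB (hβ y).le
      linarith
    have hTle : T t ≤ A / c := by
      rw [hTe, hA, Finset.sum_div]
      exact Finset.sum_le_sum hexp
    have hTc : T t * c ≤ A := (le_div_iff₀ hc0).1 hTle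
    have hPle : T t / (1 + T t) ≤ P := by
      rw [hP, div_le_div_iff₀ (hT1 t) hden]
      nlinarith [hT0 t, hA0]
    -- each e j ≤ T t ≤ P * (1 + T t)
    have hTP : T t ≤ P * (1 + T t) := by
      have := (div_le_iff₀ (hT1 t)).1 hPle
      linarith
    have heP : ∀ j ∈ E, e j ≤ P * (1 + T t) := by
      intro j hj
      refine le_trans ?_ hTP
      rw [hTe]
      exact Finset.single_le_sum (fun k _ => (he0 k).le) hj
    -- unnormalized softmax-weighted coefficient vector
    set q : Fin C → ℝ := fun k => if k = y then β y * T t else β k * e k with hq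
    have hqy : q y = β y * T t := by simp [hq]
    have hq0 : ∀ k, 0 ≤ q k := by
      intro k
      show 0 ≤ if k = y then β y * T t else β k * e k
      split
      · exact mul_nonneg (hβ y).le (hT0 t)
      · exact mul_nonneg (hβ k).le (he0 k).le
    -- step 1: triangle inequality for the numerator of g'
    have hS1 : |∑ j ∈ E, a j * e j| ≤ ∑ j ∈ E, |a j| * e j := by
      refine le_trans (Finset.abs_sum_le_sum_abs _ _) (le_of_eq ?_)
      exact Finset.sum_congr rfl fun j _ => by
        rw [abs_mul, abs_of_pos (he0 j)]
    have hS2 : ∑ j ∈ E, |a j| * e j ≤ ∑ j ∈ E, (β j * |d j| + β y * |d y|) * e j := by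
      refine Finset.sum_le_sum fun j _ => mul_le_mul_of_nonneg_right ?_ (he0 j).le
      calc |a j| ≤ |β j * d j| + |β y * d y| := by
            simp only [ha]; exact abs_sub _ _
        _ = β j * |d j| + β y * |d y| := by
            rw [abs_mul, abs_mul, abs_of_pos (hβ j), abs_of_pos (hβ y)]
    have hS3 : ∑ j ∈ E, (β j * |d j| + β y * |d y|) * e j = ∑ k, q k * |d k| := by
      rw [← Finset.add_sum_erase Finset.univ (fun k => q k * |d k|) (Finset.mem_univ y), ← hE]
      have h1 : ∑ k ∈ E, q k * |d k| = ∑ k ∈ E, β k * e k * |d k| := by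
        refine Finset.sum_congr rfl fun k hk => ?_
        rw [hq]
        simp [Finset.ne_of_mem_erase hk]
      rw [h1, hqy, hTe]
      have h2 : β y * (∑ j ∈ E, e j) * |d y| = ∑ j ∈ E, β y * e j * |d y| := by
        rw [Finset.mul_sum, Finset.sum_mul]
      rw [h2, ← Finset.sum_add_distrib]
      refine Finset.sum_congr rfl fun j _ => by ring
    -- Cauchy-Schwarz
    have hcs : ∑ k, q k * |d k| ≤
        Real.sqrt (∑ k, q k ^ 2) * Real.sqrt (∑ k, |d k| ^ 2) := by
      have hcs0 : 0 ≤ ∑ k, q k * |d k| :=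
        Finset.sum_nonneg fun k _ => mul_nonneg (hq0 k) (abs_nonneg _)
      calc ∑ k, q k * |d k| = Real.sqrt ((∑ k, q k * |d k|) ^ 2) :=
            (Real.sqrt_sq hcs0).symm
        _ ≤ Real.sqrt ((∑ k, q k ^ 2) * (∑ k, |d k| ^ 2)) :=
            Real.sqrt_le_sqrt (Finset.sum_mul_sq_le_sq_mul_sq Finset.univ q (fun k => |d k|))
        _ = _ := Real.sqrt_mul (Finset.sum_nonneg fun k _ => sq_nonneg _) _
    have hnorm : Real.sqrt (∑ k, |d k| ^ 2) = ‖s - s'‖ := by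
      rw [EuclideanSpace.norm_eq]
      refine congrArg Real.sqrt (Finset.sum_congr rfl fun k _ => ?_)
      have hk : ‖(s - s') k‖ = |d k| := by
        simp [hd, Real.norm_eq_abs]
      rw [hk]
    -- bound the coefficient norm
    have hq2 : ∑ k, q k ^ 2 ≤ (β y ^ 2 + (∑ j ∈ E, β j) ^ 2) * (P * (1 + T t)) ^ 2 := by
      rw [← Finset.add_sum_erase Finset.univ (fun k => q k ^ 2) (Finset.mem_univ y), ← hE]
      have h1 : ∑ k ∈ E, q k ^ 2 = ∑ k ∈ E, (β k * e k) ^ 2 := by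
        refine Finset.sum_congr rfl fun k hk => ?_
        rw [hq]; simp [Finset.ne_of_mem_erase hk]
      have hy1 : q y ^ 2 ≤ β y ^ 2 * (P * (1 + T t)) ^ 2 := by
        rw [hqy, mul_pow]
        refine mul_le_mul_of_nonneg_left ?_ (sq_nonneg _)
        exact pow_le_pow_left₀ (hT0 t) hTP 2
      have hy2 : ∑ k ∈ E, (β k * e k) ^ 2 ≤ ((∑ j ∈ E, β j) * (P * (1 + T t))) ^ 2 := by
        calc ∑ k ∈ E, (β k * e k) ^ 2 ≤ (∑ k ∈ E, β k * e k) ^ 2 :=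
              Finset.sum_sq_le_sq_sum_of_nonneg fun k _ =>
                mul_nonneg (hβ k).le (he0 k).le
          _ ≤ ((∑ j ∈ E, β j) * (P * (1 + T t))) ^ 2 := by
              refine pow_le_pow_left₀ (Finset.sum_nonneg fun k _ =>
                mul_nonneg (hβ k).le (he0 k).le) ?_ 2
              rw [Finset.sum_mul]
              exact Finset.sum_le_sum fun k hk =>
                mul_le_mul_of_nonneg_left (heP k hk) (hβ k).le
      rw [h1]
      calc q y ^ 2 + ∑ k ∈ E, (β k * e k) ^ 2
          ≤ β y ^ 2 * (P * (1 + T t)) ^ 2 + ((∑ j ∈ E, β j) * (P * (1 + T t))) ^ 2 :=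
            add_le_add hy1 hy2
        _ = (β y ^ 2 + (∑ j ∈ E, β j) ^ 2) * (P * (1 + T t)) ^ 2 := by ring
    have hsq : Real.sqrt (∑ k, q k ^ 2) ≤ K * (P * (1 + T t)) := by
      refine le_trans (Real.sqrt_le_sqrt hq2) (le_of_eq ?_)
      rw [Real.sqrt_mul (add_nonneg (sq_nonneg _) (sq_nonneg _)),
        Real.sqrt_sq (mul_nonneg hP0 (hT1 t).le), hK]
    -- assemble
    have hSbig : |∑ j ∈ E, a j * e j| ≤ K * (P * (1 + T t)) * ‖s - s'‖ := by
      calc |∑ j ∈ E, a j * e j| ≤ ∑ j ∈ E, |a j| * e j := hS1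
        _ ≤ ∑ j ∈ E, (β j * |d j| + β y * |d y|) * e j := hS2
        _ = ∑ k, q k * |d k| := hS3
        _ ≤ Real.sqrt (∑ k, q k ^ 2) * Real.sqrt (∑ k, |d k| ^ 2) := hcs
        _ ≤ K * (P * (1 + T t)) * ‖s - s'‖ := by
            rw [hnorm]
            exact mul_le_mul_of_nonneg_right hsq (norm_nonneg _)
    have habs : ‖g' t‖ = α * (|∑ j ∈ E, a j * e j| / (1 + T t)) := by
      rw [hg', Real.norm_eq_abs, abs_mul, abs_of_nonneg hα, abs_div,
        abs_of_pos (hT1 t)]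
    rw [habs, hM]
    calc α * (|∑ j ∈ E, a j * e j| / (1 + T t))
        ≤ α * ((K * (P * (1 + T t)) * ‖s - s'‖) / (1 + T t)) := by
          refine mul_le_mul_of_nonneg_left ?_ hα
          gcongr
      _ = α * K * P * ‖s - s'‖ := by
          rw [show K * (P * (1 + T t)) * ‖s - s'‖ = (K * P * ‖s - s'‖) * (1 + T t) by ring,
            mul_div_assoc, div_self (hT1 t).ne', mul_one]
          ring
  have key : ‖g 1 - g 0‖ ≤ M :=
    norm_image_sub_le_of_norm_deriv_le_segment_01'
      (fun t ht => (hgd t).hasDerivWithinAt)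
      (fun t ht => hbound t ⟨ht.1, ht.2.le⟩)
  have hg1 : g 1 = α * Real.log
      (1 + ∑ j ∈ E, Real.exp (β j * s j - β y * s y + Δ j - Δ y)) := by
    have hfun : ∀ j ∈ E, Real.exp (a j * 1 + b j)
        = Real.exp (β j * s j - β y * s y + Δ j - Δ y) := by
      intro j _
      congr 1
      simp only [ha, hb, hd]; ring
    simp only [hg, hT]
    rw [Finset.sum_congr rfl hfun]
  have hg0 : g 0 = α * Real.log
      (1 + ∑ j ∈ E, Real.exp (β j * s' j - β y * s' y + Δ j - Δ y)) := by
    have hfun : ∀ j ∈ E, Real.exp (a j * 0 + b j)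
        = Real.exp (β j * s' j - β y * s' y + Δ j - Δ y) := by
      intro j _
      congr 1
      simp only [ha, hb, hd]; ring
    simp only [hg, hT]
    rw [Finset.sum_congr rfl hfun]
  rw [← hg1, ← hg0]
  calc |g 1 - g 0| = ‖g 1 - g 0‖ := (Real.norm_eq_abs _).symm
    _ ≤ M := key
    _ = α * K * P * ‖s - s'‖ := hM
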